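/- Let k be a perfect field of characteristic p > 0, let B be an integral domain that is a k-algebra, and let A be a k-subalgebra of B such that b^p ∈ A for every b ∈ B. If A is a k-algebra of finite type, then B is a k-algebra of finite type and B is a finitely generated A-module. -/

import Mathlib

/-- Let `k` be a perfect field of characteristic `p > 0` (i.e. the Frobenius
`x ↦ x ^ p` of `k` is surjective), let `B` be an integral domain which is a `k`-algebra,
and let `A` be a `k`-subalgebra of `B` such that `b ^ p ∈ A` for every `b ∈ B`.
If `A` is a `k`-algebra of finite type, then `B` is a `k`-algebra of finite type and
`B` is a finitely generated `A`-module. -/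
theorem finiteType_of_subalgebra_containing_pth_powers
    (k : Type*) [Field k] (p : ℕ) (hp : 0 < p) [CharP k p]
    (hperf : Function.Surjective fun x : k => x ^ p)
    (B : Type*) [CommRing B] [IsDomain B] [Algebra k B]
    (A : Subalgebra k B) (hA : ∀ b : B, b ^ p ∈ A)
    (hfin : Algebra.FiniteType k A) :
    Algebra.FiniteType k B ∧ Module.Finite A B := by
  classical
  haveI : NeZero p := ⟨hp.ne'⟩
  haveI hfact : Fact p.Prime := CharP.char_is_prime_of_pos k p
  haveI : CharP B p := charP_of_injective_algebraMap' (A := B) k p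
  -- Frobenius on B is injective
  have hFrob : Function.Injective fun b : B => b ^ p := by
    intro x y h
    have := frobenius_inj B p
    simpa [frobenius_def] using this (a₁ := x) (a₂ := y) (by simpa [frobenius_def] using h)
  -- generators of A
  obtain ⟨t, ht⟩ := (Subalgebra.fg_iff_finiteType A).2 hfin
  set C : Subalgebra k B := Algebra.adjoin k ((fun x : B => x ^ p) '' ↑t) with hC
  have htA : (↑t : Set B) ⊆ (A : Set B) := by
    rw [← ht]; exact Algebra.subset_adjoin
  have hCA : C ≤ A := Algebra.adjoin_le (by rintro _ ⟨x, hx, rfl⟩; exact hA x)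
  have hCfin : Algebra.FiniteType k C := by
    rw [← Subalgebra.fg_iff_finiteType]
    exact ⟨t.image (fun x : B => x ^ p), by rw [hC, Finset.coe_image]⟩
  haveI : Algebra.FiniteType k C := hCfin
  haveI hCnoeth : IsNoetherianRing C := Algebra.FiniteType.isNoetherianRing k C
  -- every element of C is a p-th power of an element of A
  have hCpow : ∀ d : C, ∃ a ∈ A, a ^ p = (d : B) := by
    rintro ⟨c, hc⟩
    simp only
    induction hc using Algebra.adjoin_induction with
    | mem x hx =>
      obtain ⟨y, hy, rfl⟩ := hx
      exact ⟨y, htA hy, rfl⟩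
    | algebraMap r =>
      obtain ⟨s, hs⟩ := hperf r
      exact ⟨algebraMap k B s, Subalgebra.algebraMap_mem A s, by
        rw [← map_pow]; exact congrArg _ hs⟩
    | add x y hx hy ihx ihy =>
      obtain ⟨a, haA, rfl⟩ := ihx
      obtain ⟨b, hbA, rfl⟩ := ihy
      exact ⟨a + b, A.add_mem haA hbA, add_pow_char a b p⟩
    | mul x y hx hy ihx ihy =>
      obtain ⟨a, haA, rfl⟩ := ihx
      obtain ⟨b, hbA, rfl⟩ := ihy
      exact ⟨a * b, A.mul_mem haA hbA, mul_pow a b p⟩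
  -- the finite set of monomials in the generators with exponents < p
  let G : Set B := Set.range fun f : ↑t → Fin p => ∏ x : ↑t, (x : B) ^ (f x : ℕ)
  have hGfin : G.Finite := Set.finite_range _
  -- multiplying by a generator stays in the span of G over C
  have hmul : ∀ x ∈ t, ∀ y ∈ Submodule.span C G, x * y ∈ Submodule.span C G := by
    intro x hxt y hy
    induction hy using Submodule.span_induction with
    | mem g hg =>
      obtain ⟨f, rfl⟩ := hg
      set x₀ : ↑t := ⟨x, hxt⟩ with hx₀
      have hsplit : ∀ g : ↑t → Fin p,
          ∏ i : ↑t, (i : B) ^ (g i : ℕ)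
            = x ^ (g x₀ : ℕ) * ∏ i ∈ Finset.univ.erase x₀, (i : B) ^ (g i : ℕ) :=
        fun g => (Finset.mul_prod_erase Finset.univ
          (fun i : ↑t => (i : B) ^ (g i : ℕ)) (Finset.mem_univ x₀)).symm
      by_cases hf : (f x₀ : ℕ) + 1 < p
      · apply Submodule.subset_span
        refine ⟨Function.update f x₀ ⟨(f x₀ : ℕ) + 1, hf⟩, ?_⟩
        show (∏ i : ↑t, (i : B) ^ ((Function.update f x₀ ⟨(f x₀ : ℕ) + 1, hf⟩) i : ℕ))
          = x * ∏ i : ↑t, (i : B) ^ (f i : ℕ)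
        rw [hsplit, hsplit, Function.update_self, ← mul_assoc, ← pow_succ']
        refine congrArg₂ (· * ·) rfl ?_
        exact Finset.prod_congr rfl fun i hi => by
          rw [Function.update_of_ne (Finset.ne_of_mem_erase hi)]
      · have hfp : (f x₀ : ℕ) + 1 = p := by
          have := (f x₀).2
          omega
        have hxC : x ^ p ∈ C := Algebra.subset_adjoin ⟨x, hxt, rfl⟩
        have hPP : ∏ i ∈ Finset.univ.erase x₀, (i : B) ^ ((Function.update f x₀ 0) i : ℕ)
            = ∏ i ∈ Finset.univ.erase x₀, (i : B) ^ (f i : ℕ) :=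
          Finset.prod_congr rfl fun i hi => by
            rw [Function.update_of_ne (Finset.ne_of_mem_erase hi)]
        have key : x * ∏ i : ↑t, (i : B) ^ (f i : ℕ)
            = (⟨x ^ p, hxC⟩ : C) • ∏ i : ↑t, (i : B) ^ ((Function.update f x₀ 0) i : ℕ) := by
          rw [Subalgebra.smul_def, smul_eq_mul, hsplit f,
            hsplit (Function.update f x₀ 0), Function.update_self, hPP,
            ← mul_assoc, ← mul_assoc, ← pow_succ', hfp]
          norm_num
        rw [key]
        exact Submodule.smul_mem _ _ (Submodule.subset_span ⟨_, rfl⟩)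
    | zero => simp
    | add u v _ _ ihu ihv => rw [mul_add]; exact Submodule.add_mem _ ihu ihv
    | smul c u _ ihu => rw [mul_smul_comm]; exact Submodule.smul_mem _ _ ihu
  -- A is contained in the span of G over C
  have hAspan : (A : Set B) ⊆ (Submodule.span C G : Set B) := by
    intro a ha
    rw [← ht] at ha
    have ha' : a ∈ Submodule.span k ((Submonoid.closure (↑t : Set B) : Submonoid B) : Set B) := by
      rw [← Algebra.adjoin_eq_span]; exact ha
    have hle : Submodule.span k ((Submonoid.closure (↑t : Set B) : Submonoid B) : Set B)
        ≤ (Submodule.span C G).restrictScalars k := by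
      rw [Submodule.span_le]
      intro m hm
      induction hm using Submonoid.closure_induction_left with
      | one =>
        apply Submodule.subset_span
        refine ⟨fun _ => 0, ?_⟩
        simp
      | mul_left x hx y hy ihy => exact hmul x hx y ihy
    exact hle ha'
  -- the set of p-th powers is a C-submodule of B
  let P : Submodule C B :=
    { carrier := Set.range fun b : B => b ^ p
      add_mem' := by
        rintro _ _ ⟨a, rfl⟩ ⟨b, rfl⟩
        exact ⟨a + b, add_pow_char a b p⟩
      zero_mem' := ⟨0, zero_pow hp.ne'⟩
      smul_mem' := by
        rintro c _ ⟨b, rfl⟩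
        obtain ⟨a, -, ha⟩ := hCpow c
        refine ⟨a * b, ?_⟩
        show (a * b) ^ p = c • b ^ p
        rw [mul_pow, ha, Subalgebra.smul_def, smul_eq_mul] }
  have hPle : P ≤ Submodule.span C G := by
    rintro _ ⟨b, rfl⟩
    exact hAspan (hA b)
  -- P is finitely generated over C, by Noetherianity
  haveI hMnoeth : IsNoetherian C ↥(Submodule.span C G) :=
    isNoetherian_of_fg_of_noetherian _ (Submodule.fg_span hGfin)
  have hPfg : P.FG := by
    have h1 : (P.comap (Submodule.span C G).subtype).FG := IsNoetherian.noetherian _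
    have h2 : (P.comap (Submodule.span C G).subtype).map (Submodule.span C G).subtype = P := by
      rw [Submodule.map_comap_subtype]
      exact inf_eq_right.mpr hPle
    rw [← h2]
    exact Submodule.FG.map _ h1
  obtain ⟨S, hSfin, hSspan⟩ := Submodule.fg_def.mp hPfg
  have hSsub : S ⊆ (P : Set B) := hSspan ▸ Submodule.subset_span
  -- choose p-th roots of elements of S
  have hroot : ∀ m ∈ S, ∃ b : B, b ^ p = m := fun m hm => hSsub hm
  choose! r hr using hroot
  -- B is spanned over A by the images of r
  have hspanA : Submodule.span A (r '' S) = ⊤ := by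
    rw [eq_top_iff]
    rintro b -
    have hb : b ^ p ∈ Submodule.span C S := by rw [hSspan]; exact ⟨b, rfl⟩
    rw [Submodule.mem_span_set] at hb
    obtain ⟨c, hcsupp, hcsum⟩ := hb
    choose a haA ha using fun d => hCpow d
    have hb2 : b ^ p = (∑ m ∈ c.support, a (c m) * r m) ^ p := by
      rw [sum_pow_char]
      rw [← hcsum, Finsupp.sum]
      refine Finset.sum_congr rfl fun m hm => ?_
      rw [mul_pow, ha (c m), hr m (hcsupp hm), Subalgebra.smul_def, smul_eq_mul]
    have hb3 : b = ∑ m ∈ c.support, a (c m) * r m := hFrob hb2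
    rw [hb3]
    refine Submodule.sum_mem _ fun m hm => ?_
    have : a (c m) * r m = (⟨a (c m), haA (c m)⟩ : A) • r m := by
      rw [Subalgebra.smul_def, smul_eq_mul]
    rw [this]
    exact Submodule.smul_mem _ _ (Submodule.subset_span ⟨m, hcsupp hm, rfl⟩)
  haveI hBfin : Module.Finite A B :=
    ⟨Submodule.fg_def.mpr ⟨r '' S, hSfin.image r, hspanA⟩⟩
  haveI : Algebra.FiniteType A B := Module.Finite.finiteType B
  exact ⟨Algebra.FiniteType.trans hfin inferInstance, hBfin⟩
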